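/- Let d ≥ 1 be an odd integer and n ≥ 0 an integer. Then the real number a_n := Σ_{t=1}^{(d−1)/2} (2·cos(π(2t−1)/d))^n is an integer. -/

import Mathlib

open Finset Real Complex

/-- Full geometric sum over all `d`-th roots of `-1`, `d = 2e+1`. -/
lemma full_exp_sum (e : ℕ) (m : ℤ) :
    ∑ t ∈ Finset.Icc 1 (2*e+1),
      Complex.exp ((((m:ℝ) * (Real.pi * (2*(t:ℝ)-1) / ((2*e+1:ℕ):ℝ))) : ℝ) * Complex.I) =
      (((if ((2*e+1 : ℕ):ℤ) ∣ m then ((2*e+1:ℕ):ℝ) * (-1:ℝ)^m else 0) : ℝ) : ℂ) := by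
  set d : ℕ := 2*e+1 with hd
  have hd0 : (d:ℝ) ≠ 0 := by positivity
  set a : ℝ := m * Real.pi / d with ha
  have hterm : ∀ t ∈ Finset.Icc 1 d,
      Complex.exp ((((m:ℝ) * (Real.pi * (2*(t:ℝ)-1) / ((d:ℕ):ℝ))) : ℝ) * Complex.I)
        = Complex.exp ((a:ℝ)*Complex.I) * (Complex.exp (((2*a : ℝ))*Complex.I))^(t-1) := by
    intro t ht
    rw [← Complex.exp_nat_mul, ← Complex.exp_add]
    congr 1
    have ht1 : 1 ≤ t := (Finset.mem_Icc.mp ht).1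
    have hc : ((t-1 : ℕ) : ℝ) = (t:ℝ) - 1 := by
      push_cast [Nat.cast_sub ht1]; ring
    rw [ha]
    have hdne : ((d:ℕ):ℂ) ≠ 0 := by exact_mod_cast hd0
    push_cast [hc, Nat.cast_sub ht1]
    field_simp
    ring
  rw [Finset.sum_congr rfl hterm]
  have hsum : ∑ t ∈ Finset.Icc 1 d,
      Complex.exp ((a:ℝ)*Complex.I) * (Complex.exp (((2*a : ℝ))*Complex.I))^(t-1)
      = Complex.exp ((a:ℝ)*Complex.I) *
        ∑ k ∈ Finset.range d, (Complex.exp (((2*a : ℝ))*Complex.I))^k := by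
    rw [Finset.mul_sum, ← Finset.Ico_add_one_right_eq_Icc, Finset.sum_Ico_eq_sum_range]
    simp
  rw [hsum]
  by_cases hdvd : ((d:ℕ):ℤ) ∣ m
  · obtain ⟨s, hs⟩ := hdvd
    have ha' : a = s * Real.pi := by
      rw [ha, hs]; push_cast; field_simp
    have hq : Complex.exp (((2*a : ℝ))*Complex.I) = 1 := by
      rw [ha']
      have : (((2*(s * Real.pi) : ℝ)) : ℂ) * Complex.I = (s:ℂ) * (2*(Real.pi:ℂ)*Complex.I) := by
        push_cast; ring
      rw [this, Complex.exp_int_mul_two_pi_mul_I]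
    have hexp : Complex.exp ((a:ℝ)*Complex.I) = (-1:ℂ)^s := by
      rw [ha']
      have : (((s * Real.pi : ℝ)) : ℂ) * Complex.I = (s:ℂ) * ((Real.pi:ℂ)*Complex.I) := by
        push_cast; ring
      rw [this]
      rw [show ((s:ℂ) * ((Real.pi:ℂ)*Complex.I)) = (s:ℤ) * ((Real.pi:ℂ)*Complex.I) by push_cast; ring,
        Complex.exp_int_mul, Complex.exp_pi_mul_I]
    have hsign : (-1:ℂ)^s = (-1:ℂ)^m := by
      rw [hs, zpow_mul]
      congr 1
      rw [show ((d:ℕ):ℤ) = (d:ℤ) from rfl, zpow_natCast]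
      have hdo : Odd d := ⟨e, by simp only [hd]⟩
      exact (Odd.neg_one_pow hdo).symm
    simp only [hq, one_pow, Finset.sum_const, Finset.card_range, nsmul_eq_mul, mul_one]
    rw [hexp, hsign, if_pos ⟨s, hs⟩]
    push_cast [Complex.ofReal_zpow]
    ring
  · have hq : Complex.exp (((2*a : ℝ))*Complex.I) ≠ 1 := by
      intro h
      rw [Complex.exp_eq_one_iff] at h
      obtain ⟨k, hk⟩ := h
      apply hdvd
      have hk2 : ((2*a : ℝ) : ℂ) = (k:ℂ) * (2*(Real.pi:ℂ)) :=
        mul_left_cancel₀ Complex.I_ne_zero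
          (show Complex.I * ((2*a : ℝ):ℂ) = Complex.I * ((k:ℂ) * (2*(Real.pi:ℂ))) by
            push_cast at hk ⊢; linear_combination hk)
      have hre : (2*a : ℝ) = (k:ℝ) * (2*Real.pi) := by exact_mod_cast hk2
      rw [ha] at hre
      have h3 : (m:ℝ) * (2*Real.pi) = ((k:ℝ)*(d:ℕ)) * (2*Real.pi) := by
        field_simp at hre
        linear_combination (2*Real.pi) * hre
      have h4 : (m:ℝ) = ((d:ℕ):ℝ) * (k:ℝ) :=
        mul_right_cancel₀ (by positivity : (2*Real.pi:ℝ) ≠ 0) (by linear_combination h3)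
      exact ⟨k, by exact_mod_cast h4⟩
    rw [geom_sum_eq hq]
    have hqd : (Complex.exp (((2*a : ℝ))*Complex.I))^d = 1 := by
      rw [← Complex.exp_nat_mul]
      have hr : ((d:ℕ):ℝ) * (2*a) = (m:ℝ) * (2*Real.pi) := by
        rw [ha]; field_simp
      have harg : ((d:ℕ):ℂ) * ((((2*a : ℝ)) : ℂ) * Complex.I) = (m:ℂ) * (2*(Real.pi:ℂ)*Complex.I) := by
        rw [show ((d:ℕ):ℂ) * ((((2*a : ℝ)) : ℂ) * Complex.I) = ((((d:ℕ):ℝ) * (2*a) : ℝ):ℂ) * Complex.I by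
          push_cast; ring, hr]
        push_cast; ring
      rw [harg]
      exact_mod_cast Complex.exp_int_mul_two_pi_mul_I m
    rw [hqd, if_neg hdvd]
    simp

/-- Half sum of cosines. -/
lemma half_cos_sum (e : ℕ) (m : ℤ) :
    ∑ t ∈ Finset.Icc 1 e, Real.cos ((m:ℝ) * (Real.pi * (2*(t:ℝ)-1) / ((2*e+1:ℕ):ℝ))) =
      ((if ((2*e+1 : ℕ):ℤ) ∣ m then ((2*e+1:ℕ):ℝ) else 0) - 1) * (-1:ℝ)^m / 2 := by
  set d : ℕ := 2*e+1 with hd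
  have hd0 : ((d:ℕ):ℝ) ≠ 0 := by positivity
  set f : ℕ → ℝ := fun t => Real.cos ((m:ℝ) * (Real.pi * (2*(t:ℝ)-1) / ((d:ℕ):ℝ))) with hf
  have hfull : ∑ t ∈ Finset.Icc 1 d, f t
      = (if ((d:ℕ):ℤ) ∣ m then ((d:ℕ):ℝ) * (-1:ℝ)^m else 0) := by
    have h := congrArg Complex.re (full_exp_sum e m)
    rw [Complex.re_sum] at h
    simp only [Complex.exp_ofReal_mul_I_re, Complex.ofReal_re] at h
    exact h
  -- middle term
  have hmid : f (e+1) = (-1:ℝ)^m := by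
    have : (m:ℝ) * (Real.pi * (2*((e+1:ℕ):ℝ)-1) / ((d:ℕ):ℝ)) = (m:ℝ) * Real.pi := by
      field_simp
      push_cast [hd]
      ring
    rw [hf]
    simp only [this]
    have := Real.cos_int_mul_pi_sub 0 m
    simpa using this
  -- reflection
  have hrefl : ∑ t ∈ Finset.Ioc (e+1) d, f t = ∑ t ∈ Finset.Ioc 0 e, f t := by
    apply Finset.sum_nbij' (fun t => 2*e+2-t) (fun t => 2*e+2-t)
    · intro t ht; simp only [Finset.mem_Ioc] at *; omega
    · intro t ht; simp only [Finset.mem_Ioc] at *; omega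
    · intro t ht; simp only [Finset.mem_Ioc] at ht; omega
    · intro t ht; simp only [Finset.mem_Ioc] at ht; omega
    · intro t ht
      simp only [Finset.mem_Ioc] at ht
      rw [hf]
      have hcast : ((2*e+2-t : ℕ) : ℝ) = 2*(e:ℝ)+2-(t:ℝ) := by
        push_cast [Nat.cast_sub (by omega : t ≤ 2*e+2)]; ring
      have harg : (m:ℝ) * (Real.pi * (2*((2*e+2-t:ℕ):ℝ)-1) / ((d:ℕ):ℝ))
          = (m:ℝ) * (2*Real.pi) - (m:ℝ) * (Real.pi * (2*(t:ℝ)-1) / ((d:ℕ):ℝ)) := by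
        rw [hcast]
        push_cast [hd]
        field_simp
        ring
      simp only [harg]
      rw [Real.cos_int_mul_two_pi_sub]
  have hsplit : ∑ t ∈ Finset.Icc 1 d, f t
      = (∑ t ∈ Finset.Icc 1 e, f t) + f (e+1) + ∑ t ∈ Finset.Ioc (e+1) d, f t := by
    have h1 : Finset.Icc 1 d = Finset.Ioc 0 d := rfl
    have h2 : Finset.Icc 1 e = Finset.Ioc 0 e := rfl
    rw [h1, h2]
    rw [← Finset.sum_Ioc_consecutive f (by omega : 0 ≤ e+1) (by omega : e+1 ≤ d)]
    rw [← Finset.sum_Ioc_consecutive f (by omega : 0 ≤ e) (by omega : e ≤ e+1)]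
    have : ∑ t ∈ Finset.Ioc e (e+1), f t = f (e+1) := by
      rw [Finset.sum_Ioc_succ_top (le_refl e), Finset.Ioc_self, Finset.sum_empty, zero_add]
    rw [this]
  have h2 : Finset.Icc 1 e = Finset.Ioc 0 e := rfl
  rw [h2] at hsplit ⊢
  rw [hrefl, hmid] at hsplit
  rw [hfull] at hsplit
  by_cases hdvd : ((d:ℕ):ℤ) ∣ m
  · rw [if_pos hdvd] at hsplit ⊢
    have hz : ((-1:ℝ)^m)⁻¹ = (-1:ℝ)^m := by
      rcases Int.even_or_odd m with h | h
      · simp [h.neg_one_zpow]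
      · rw [h.neg_one_zpow]; norm_num
    nlinarith [hsplit, sq_nonneg ((-1:ℝ)^m)]
  · rw [if_neg hdvd] at hsplit ⊢
    linarith

/-- Binomial expansion of a power of `2 cos θ`. -/
lemma two_cos_pow (θ : ℝ) (n : ℕ) :
    (2*Real.cos θ)^n = ∑ j ∈ Finset.range (n+1),
      (n.choose j : ℝ) * Real.cos ((2*(j:ℝ) - (n:ℝ)) * θ) := by
  have key : (((2*Real.cos θ : ℝ)) : ℂ)^n = ∑ j ∈ Finset.range (n+1),
      ((n.choose j : ℝ) : ℂ) * Complex.exp ((((2*(j:ℝ) - (n:ℝ)) * θ : ℝ)) * Complex.I) := by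
    have h1 : (((2*Real.cos θ : ℝ)) : ℂ)
        = Complex.exp ((θ:ℝ)*Complex.I) + Complex.exp (((-θ:ℝ))*Complex.I) := by
      rw [Complex.exp_mul_I, Complex.exp_mul_I]
      push_cast
      rw [Complex.cos_neg, Complex.sin_neg, ← Complex.ofReal_cos]
      push_cast
      ring
    rw [h1, add_pow]
    apply Finset.sum_congr rfl
    intro j hj
    have hjn : j ≤ n := by simp at hj; omega
    rw [← Complex.exp_nat_mul, ← Complex.exp_nat_mul, ← Complex.exp_add]
    have hcast : ((n - j : ℕ) : ℝ) = (n:ℝ) - (j:ℝ) := by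
      push_cast [Nat.cast_sub hjn]; ring
    have harg : (j:ℂ) * ((θ:ℝ)*Complex.I) + ((n-j : ℕ):ℂ) * (((-θ:ℝ))*Complex.I)
        = (((2*(j:ℝ) - (n:ℝ)) * θ : ℝ)) * Complex.I := by
      have : ((n-j : ℕ):ℂ) = ((n:ℝ) : ℂ) - ((j:ℝ):ℂ) := by exact_mod_cast congrArg (Complex.ofReal) hcast
      rw [this]
      push_cast
      ring
    rw [harg]
    push_cast
    ring
  have h2 := congrArg Complex.re key
  rw [Complex.re_sum] at h2
  rw [show ((((2*Real.cos θ:ℝ)):ℂ)^n).re = (2*Real.cos θ)^n by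
    rw [← Complex.ofReal_pow]; exact Complex.ofReal_re _] at h2
  rw [h2]
  apply Finset.sum_congr rfl
  intro j hj
  rw [Complex.mul_re, Complex.exp_ofReal_mul_I_re]
  simp

/-- Central binomial coefficients are even. -/
lemma central_choose_even (k : ℕ) : 2 ∣ (2*(k+1)).choose (k+1) := by
  have h1 : (2*(k+1)).choose (k+1) = (2*k+1).choose k + (2*k+1).choose (k+1) := by
    rw [show 2*(k+1) = (2*k+1)+1 by ring]
    exact Nat.choose_succ_succ (2*k+1) k
  have h2 : (2*k+1).choose k = (2*k+1).choose (k+1) := by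
    have := Nat.choose_symm (show k ≤ 2*k+1 by omega)
    rw [show 2*k+1-k = k+1 by omega] at this
    exact this.symm
  omega

lemma N_even (e n : ℕ) (hn : 1 ≤ n) :
    2 ∣ ∑ j ∈ (Finset.range (n+1)).filter (fun j : ℕ => ((2*e+1:ℕ):ℤ) ∣ (2*(j:ℤ) - (n:ℤ))),
      n.choose j := by
  have hz : ((∑ j ∈ (Finset.range (n+1)).filter
      (fun j : ℕ => ((2*e+1:ℕ):ℤ) ∣ (2*(j:ℤ) - (n:ℤ))), n.choose j : ℕ) : ZMod 2) = 0 := by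
    push_cast
    apply Finset.sum_involution (fun a _ => n - a)
    · intro a ha
      simp only [Finset.mem_filter, Finset.mem_range] at ha
      have han : a ≤ n := by omega
      have hsymm : n.choose (n - a) = n.choose a := Nat.choose_symm han
      rw [hsymm]
      have h22 : ((n.choose a : ℕ) : ZMod 2) + ↑(n.choose a) = 2 * ↑(n.choose a) := by ring
      rw [h22, show (2 : ZMod 2) = 0 from rfl, zero_mul]
    · intro a ha hne
      simp only [Finset.mem_filter, Finset.mem_range] at ha
      intro heq
      have han : a ≤ n := by omega
      have hn2a : n = 2*a := by omega
      have ha1 : 1 ≤ a := by omega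
      apply hne
      obtain ⟨k, hk⟩ : ∃ k, a = k + 1 := ⟨a - 1, by omega⟩
      have hcc := central_choose_even k
      rw [← hk, ← hn2a] at hcc
      obtain ⟨c, hc⟩ := hcc
      rw [hc]
      push_cast
      rw [show (2 : ZMod 2) = 0 from rfl]
      ring
    · intro a ha
      simp only [Finset.mem_filter, Finset.mem_range] at ha ⊢
      constructor
      · omega
      · have han : a ≤ n := by omega
        have hneg : (2*((n-a : ℕ):ℤ) - (n:ℤ)) = -(2*(a:ℤ) - n) := by
          push_cast [Nat.cast_sub han]; ring
        rw [hneg]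
        exact dvd_neg.mpr ha.2
    · intro a ha
      simp only [Finset.mem_filter, Finset.mem_range] at ha
      omega
  exact (ZMod.natCast_eq_zero_iff _ 2).mp hz

/-- Let d ≥ 1 be odd and n ≥ 0. Then a_n := Σ_{t=1}^{(d−1)/2} (2·cos(π(2t−1)/d))^n
is an integer. -/
theorem stmt_9 {d : ℕ} (hd : 1 ≤ d) (hodd : Odd d) (n : ℕ) :
    ∃ z : ℤ, (∑ t ∈ Finset.Icc 1 ((d - 1) / 2),
      (2 * Real.cos (Real.pi * (2 * (t : ℝ) - 1) / d)) ^ n) = (z : ℝ) := by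
  obtain ⟨e, rfl⟩ : ∃ e, d = 2*e+1 := by
    obtain ⟨k, hk⟩ := hodd; exact ⟨k, by omega⟩
  have he : (2*e+1-1)/2 = e := by omega
  rw [he]
  set N : ℕ := ∑ j ∈ (Finset.range (n+1)).filter (fun j : ℕ => ((2*e+1:ℕ):ℤ) ∣ (2*(j:ℤ) - (n:ℤ))),
      n.choose j with hN
  have hdvd2 : (2:ℤ) ∣ (((2*e+1:ℕ):ℤ) * N - 2^n) := by
    rcases Nat.eq_zero_or_pos n with h0 | h1
    · subst h0
      have : N = 1 := by
        rw [hN]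
        rw [Finset.range_one, Finset.filter_singleton, if_pos (by simp)]
        simp
      rw [this]
      push_cast
      omega
    · obtain ⟨c, hc⟩ := N_even e n h1
      obtain ⟨p, hp⟩ : (2:ℤ) ∣ 2^n := dvd_pow_self 2 (by omega)
      rw [hN, hc, hp]
      exact ⟨((2*e+1:ℕ):ℤ) * c - p, by push_cast; ring⟩
  obtain ⟨z, hz⟩ := hdvd2
  refine ⟨(-1)^n * z, ?_⟩
  -- main computation
  have step1 : ∑ t ∈ Finset.Icc 1 e, (2 * Real.cos (Real.pi * (2 * (t : ℝ) - 1) / ((2*e+1:ℕ):ℝ))) ^ n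
      = ∑ j ∈ Finset.range (n+1), (n.choose j : ℝ) *
        (((if ((2*e+1 : ℕ):ℤ) ∣ (2*(j:ℤ) - (n:ℤ)) then ((2*e+1:ℕ):ℝ) else 0) - 1) * (-1:ℝ)^n / 2) := by
    simp only [two_cos_pow]
    rw [Finset.sum_comm]
    apply Finset.sum_congr rfl
    intro j hj
    rw [← Finset.mul_sum]
    congr 1
    have harg : ∀ t : ℕ, (2*(j:ℝ) - (n:ℝ)) * (Real.pi * (2 * (t : ℝ) - 1) / ((2*e+1:ℕ):ℝ))
        = ((2*(j:ℤ) - (n:ℤ) : ℤ):ℝ) * (Real.pi * (2*(t:ℝ)-1) / ((2*e+1:ℕ):ℝ)) := by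
      intro t; push_cast; ring
    simp only [harg]
    rw [half_cos_sum e (2*(j:ℤ) - (n:ℤ))]
    congr 1
    rw [show ((-1:ℝ)^(2*(j:ℤ) - (n:ℤ))) = (-1:ℝ)^n from ?_]
    rw [zpow_sub₀ (by norm_num : (-1:ℝ) ≠ 0)]
    rw [show (2*(j:ℤ)) = ((2*j : ℕ) : ℤ) by push_cast; ring, zpow_natCast, zpow_natCast]
    rw [show (2*j) = 2*j from rfl, pow_mul]
    norm_num
    rcases Nat.even_or_odd n with h | h
    · simp [h.neg_one_pow]
    · rw [h.neg_one_pow]; norm_num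
  rw [step1]
  have step2 : ∑ j ∈ Finset.range (n+1), (n.choose j : ℝ) *
        (((if ((2*e+1 : ℕ):ℤ) ∣ (2*(j:ℤ) - (n:ℤ)) then ((2*e+1:ℕ):ℝ) else 0) - 1) * (-1:ℝ)^n / 2)
      = ((-1:ℝ)^n / 2) * (((2*e+1:ℕ):ℝ) * N - 2^n) := by
    have hsplit : ∀ j, (n.choose j : ℝ) *
        (((if ((2*e+1 : ℕ):ℤ) ∣ (2*(j:ℤ) - (n:ℤ)) then ((2*e+1:ℕ):ℝ) else 0) - 1) * (-1:ℝ)^n / 2)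
        = ((-1:ℝ)^n / 2) * ((if ((2*e+1 : ℕ):ℤ) ∣ (2*(j:ℤ) - (n:ℤ)) then ((2*e+1:ℕ):ℝ) * (n.choose j : ℝ) else 0)
            - (n.choose j : ℝ)) := by
      intro j
      by_cases h : ((2*e+1 : ℕ):ℤ) ∣ (2*(j:ℤ) - (n:ℤ))
      · rw [if_pos h, if_pos h]; ring
      · rw [if_neg h, if_neg h]; ring
    rw [Finset.sum_congr rfl (fun j _ => hsplit j), ← Finset.mul_sum]
    congr 1
    rw [Finset.sum_sub_distrib]
    congr 1
    · rw [← Finset.sum_filter, hN, ← Finset.mul_sum]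
      push_cast
      ring
    · rw [← Nat.cast_sum]
      rw [Nat.sum_range_choose]
      push_cast
      ring
  rw [step2]
  have : (((2*e+1:ℕ):ℝ) * N - 2^n) = ((((2*e+1:ℕ):ℤ) * N - 2^n : ℤ) : ℝ) := by push_cast; ring
  rw [this, hz]
  push_cast
  ring
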